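/- (Sharpness construction, non-uniqueness.) With $\Phi x = (1-t/4)^{-1/2}(x - \langle x_1, x\rangle x_1)$ as above, let $x_0 \in \mathbb{R}^N$ have ones in its first $s$ blocks (of size $d$) and zeros elsewhere, and $\hat{x} \in \mathbb{R}^N$ have $-1$ entries in blocks $s+1$ through $2s$ and zeros elsewhere. Then $x_0$ and $\hat{x}$ are distinct block $s$-sparse vectors with $\|x_0\|_{2,\mathcal{I}} = \|\hat{x}\|_{2,\mathcal{I}} = s\sqrt{d}$ and $\Phi x_0 = \Phi \hat{x}$; consequently the $\ell_2/\ell_1$ minimization $\min \|z\|_{2,\mathcal{I}}$ subject to $\Phi z = \Phi x_0$ cannot uniquely recover $x_0$. -/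

import Mathlib

open Finset
lemma aux_card_lt {l : ℕ} (n : ℕ) (h : n ≤ l) :
    ((univ : Finset (Fin l)).filter (fun i : Fin l => (i : ℕ) < n)).card = n := by
  have := Finset.card_bij (s := (univ : Finset (Fin l)).filter (fun i : Fin l => (i : ℕ) < n))
    (t := Finset.range n) (fun i _ => (i : ℕ))
    (by intro a ha; simp at ha ⊢; omega)
    (by intro a _ b _ hab; exact Fin.val_injective hab)
    (by intro b hb; simp at hb; exact ⟨⟨b, by omega⟩, by simp; omega, rfl⟩)
  simpa using this

lemma aux_card_band {l : ℕ} (a b : ℕ) (h : b ≤ l) (hab : a ≤ b) :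
    ((univ : Finset (Fin l)).filter (fun i : Fin l => a ≤ (i : ℕ) ∧ (i : ℕ) < b)).card = b - a := by
  have := Finset.card_bij
    (s := (univ : Finset (Fin l)).filter (fun i : Fin l => a ≤ (i : ℕ) ∧ (i : ℕ) < b))
    (t := Finset.range (b - a)) (fun i _ => (i : ℕ) - a)
    (by intro x hx; simp at hx ⊢; omega)
    (by intro x hx y hy hxy; simp at hx hy; apply Fin.ext; omega)
    (by intro m hm; simp at hm; exact ⟨⟨m + a, by omega⟩, by simp; omega, by simp⟩)
  simpa using this

/-- The space of block-structured vectors in `ℝ^N`, where `N = d 0 + ⋯ + d (l-1)`: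
block `i` lives in `ℝ^(d i)` and the whole space carries the `ℓ₂` norm. -/
abbrev BlockVec {l : ℕ} (d : Fin l → ℕ) :=
  PiLp 2 (fun i : Fin l => EuclideanSpace ℝ (Fin (d i)))

/-- `x` is block `s`-sparse: at most `s` nonzero blocks. -/
def BlockSparse {l : ℕ} {d : Fin l → ℕ} (s : ℕ) (x : BlockVec d) : Prop :=
  ∃ S : Finset (Fin l), S.card ≤ s ∧ ∀ i ∉ S, x i = 0

/-- The mixed `ℓ₂/ℓ₁` norm `‖x‖_{2,ℐ} = ∑ i, ‖x[i]‖₂`. -/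
noncomputable def blockL1 {l : ℕ} {d : Fin l → ℕ} (x : BlockVec d) : ℝ :=
  ∑ i, ‖x i‖

/-- `x_S`: keep the blocks indexed by `S`, zero out the rest. -/
def blockRestrict {l : ℕ} {d : Fin l → ℕ} (x : BlockVec d) (S : Finset (Fin l)) :
    BlockVec d := WithLp.toLp 2 fun i => if i ∈ S then x i else 0

/-- The unit vector `x₁ = (2sd)^{-1/2}(1,…,1,0,…,0)ᵀ`, with ones filling the first `2s`
blocks (each of size `dsize`). -/
noncomputable def x1Vec {l : ℕ} (s dsize : ℕ) (d : Fin l → ℕ) : BlockVec d :=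
  WithLp.toLp 2 fun (i : Fin l) => WithLp.toLp 2 fun (_ : Fin (d i)) => if (i : ℕ) < 2 * s then (Real.sqrt (2 * s * dsize))⁻¹ else 0

/-- The linear transformation `Φ x = (1 - t/4)^{-1/2} (x - ⟨x₁, x⟩ x₁)`. -/
noncomputable def PhiMap {l : ℕ} {d : Fin l → ℕ} (t : ℝ) (x1 : BlockVec d)
    (x : BlockVec d) : BlockVec d :=
  (Real.sqrt (1 - t / 4))⁻¹ • (x - (inner ℝ x1 x : ℝ) • x1)

/-- `x₀`: ones in the first `s` blocks, zeros elsewhere. -/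
noncomputable def x0Vec {l : ℕ} (s : ℕ) (d : Fin l → ℕ) : BlockVec d :=
  WithLp.toLp 2 fun (i : Fin l) => WithLp.toLp 2 fun (_ : Fin (d i)) => if (i : ℕ) < s then (1 : ℝ) else 0

/-- `x̂`: entries `-1` in blocks `s+1` through `2s`, zeros elsewhere. -/
noncomputable def xhatVec {l : ℕ} (s : ℕ) (d : Fin l → ℕ) : BlockVec d :=
  WithLp.toLp 2 fun (i : Fin l) => WithLp.toLp 2 fun (_ : Fin (d i)) => if s ≤ (i : ℕ) ∧ (i : ℕ) < 2 * s then (-1 : ℝ) else 0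

/-- Theorem 1.2, sharpness construction — non-uniqueness: `x₀` and `x̂`
are distinct block `s`-sparse vectors with `‖x₀‖_{2,ℐ} = ‖x̂‖_{2,ℐ} = s√d` and
`Φx₀ = Φx̂`, so the `ℓ₂/ℓ₁` minimization subject to `Φz = Φx₀` cannot uniquely
recover `x₀`. -/
theorem sharpness_nonuniqueness {l : ℕ} (s dsize : ℕ) (d : Fin l → ℕ)
    (hd : 0 < dsize) (hs : 1 ≤ s) (hl : 2 * s < l)
    (hfirst : ∀ i : Fin l, (i : ℕ) < 2 * s → d i = dsize)
    (t : ℝ) (ht0 : 0 < t) (ht4 : t < 4 / 3) :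
    x0Vec s d ≠ xhatVec s d ∧
    BlockSparse s (x0Vec s d) ∧ BlockSparse s (xhatVec s d) ∧
    blockL1 (x0Vec s d) = s * Real.sqrt dsize ∧
    blockL1 (xhatVec s d) = s * Real.sqrt dsize ∧
    PhiMap t (x1Vec s dsize d) (x0Vec s d) = PhiMap t (x1Vec s dsize d) (xhatVec s d) ∧
    ∃ z : BlockVec d, z ≠ x0Vec s d ∧
      PhiMap t (x1Vec s dsize d) z = PhiMap t (x1Vec s dsize d) (x0Vec s d) ∧
      blockL1 z ≤ blockL1 (x0Vec s d) := by
  have hsl : s ≤ l := by omega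
  have h2sl : 2 * s ≤ l := le_of_lt hl
  have hspos : (0:ℝ) < (s:ℝ) := by exact_mod_cast hs
  have hdpos : (0:ℝ) < (dsize:ℝ) := by exact_mod_cast hd
  have hpos : (0:ℝ) < 2 * (s:ℝ) * (dsize:ℝ) := by nlinarith
  have hr : Real.sqrt (2 * (s:ℝ) * dsize) ≠ 0 := ne_of_gt (Real.sqrt_pos.mpr hpos)
  -- inner product of x1 with itself is 1
  have hinner : (inner ℝ (x1Vec s dsize d) (x1Vec s dsize d) : ℝ) = 1 := by
    rw [PiLp.inner_apply]
    have hblock : ∀ i : Fin l, (inner ℝ (x1Vec s dsize d i) (x1Vec s dsize d i) : ℝ)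
        = if (i:ℕ) < 2*s then (dsize : ℝ) * ((Real.sqrt (2*(s:ℝ)*dsize))⁻¹)^2 else 0 := by
      intro i
      rw [PiLp.inner_apply]
      by_cases hi : (i:ℕ) < 2*s
      · simp only [x1Vec, PiLp.toLp_apply, if_pos hi, RCLike.inner_apply, conj_trivial]
        rw [Finset.sum_const, Finset.card_univ, Fintype.card_fin, nsmul_eq_mul, hfirst i hi]
        ring
      · simp [x1Vec, hi]
    rw [Finset.sum_congr rfl (fun i _ => hblock i), ← Finset.sum_filter,
      Finset.sum_const, aux_card_lt _ h2sl, nsmul_eq_mul]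
    have hsq : ((Real.sqrt (2*(s:ℝ)*dsize))⁻¹)^2 = (2*(s:ℝ)*dsize)⁻¹ := by
      rw [inv_pow, Real.sq_sqrt hpos.le]
    rw [hsq]
    field_simp
    push_cast; ring
  -- the difference
  have hdiff : x0Vec s d - xhatVec s d = Real.sqrt (2*(s:ℝ)*dsize) • x1Vec s dsize d := by
    ext i j
    have : (x0Vec s d - xhatVec s d) i j = x0Vec s d i j - xhatVec s d i j := rfl
    rw [this]
    have : (Real.sqrt (2*(s:ℝ)*dsize) • x1Vec s dsize d) i j
        = Real.sqrt (2*(s:ℝ)*dsize) * x1Vec s dsize d i j := rfl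
    rw [this]
    simp only [x0Vec, xhatVec, x1Vec, PiLp.toLp_apply]
    rcases lt_or_ge (i:ℕ) s with hi | hi
    · rw [if_pos hi, if_neg (by omega), if_pos (by omega), mul_inv_cancel₀ hr]; ring
    · rcases lt_or_ge (i:ℕ) (2*s) with hi2 | hi2
      · rw [if_neg (by omega), if_pos ⟨hi, hi2⟩, if_pos hi2, mul_inv_cancel₀ hr]; ring
      · rw [if_neg (by omega), if_neg (by omega), if_neg (by omega)]; ring
  have hid : (inner ℝ (x1Vec s dsize d) (x0Vec s d) : ℝ) - inner ℝ (x1Vec s dsize d) (xhatVec s d)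
      = Real.sqrt (2*(s:ℝ)*dsize) := by
    rw [← inner_sub_right, hdiff, real_inner_smul_right, hinner, mul_one]
  have hPhi : PhiMap t (x1Vec s dsize d) (x0Vec s d) = PhiMap t (x1Vec s dsize d) (xhatVec s d) := by
    unfold PhiMap
    congr 1
    rw [sub_eq_sub_iff_sub_eq_sub, hdiff, ← sub_smul, hid]
  -- norms
  have hnorm0 : ∀ i : Fin l, ‖x0Vec s d i‖ = if (i:ℕ) < s then Real.sqrt dsize else 0 := by
    intro i
    rw [EuclideanSpace.norm_eq]
    by_cases hi : (i:ℕ) < s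
    · have hdi := hfirst i (by omega)
      simp [x0Vec, PiLp.toLp_apply, hi, hdi]
    · simp [x0Vec, PiLp.toLp_apply, hi]
  have hnormh : ∀ i : Fin l, ‖xhatVec s d i‖
      = if s ≤ (i:ℕ) ∧ (i:ℕ) < 2*s then Real.sqrt dsize else 0 := by
    intro i
    rw [EuclideanSpace.norm_eq]
    by_cases hi : s ≤ (i:ℕ) ∧ (i:ℕ) < 2*s
    · have hdi := hfirst i (by omega)
      simp [xhatVec, PiLp.toLp_apply, hi, hdi]
    · simp [xhatVec, PiLp.toLp_apply, hi]
  have hbl0 : blockL1 (x0Vec s d) = s * Real.sqrt dsize := by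
    unfold blockL1
    rw [Finset.sum_congr rfl (fun i _ => hnorm0 i), ← Finset.sum_filter,
      Finset.sum_const, aux_card_lt s hsl, nsmul_eq_mul]
  have hblh : blockL1 (xhatVec s d) = s * Real.sqrt dsize := by
    unfold blockL1
    rw [Finset.sum_congr rfl (fun i _ => hnormh i), ← Finset.sum_filter,
      Finset.sum_const, aux_card_band s (2*s) h2sl (by omega),
      show 2*s - s = s from by omega, nsmul_eq_mul]
  -- distinctness
  have hne : x0Vec s d ≠ xhatVec s d := by
    have h0l : 0 < l := by omega
    intro h
    have hj : 0 < d ⟨0, h0l⟩ := by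
      rw [hfirst ⟨0, h0l⟩ (show (0:ℕ) < 2*s by omega)]; exact hd
    have h1 := congrArg (fun v : BlockVec d => v ⟨0, h0l⟩ ⟨0, hj⟩) h
    simp only [x0Vec, xhatVec, Fin.val_mk, PiLp.toLp_apply] at h1
    rw [if_pos (show (0:ℕ) < s by omega), if_neg (by omega)] at h1
    exact one_ne_zero h1
  refine ⟨hne, ⟨(univ : Finset (Fin l)).filter (fun i : Fin l => (i:ℕ) < s),
      le_of_eq (aux_card_lt s hsl), ?_⟩,
    ⟨(univ : Finset (Fin l)).filter (fun i : Fin l => s ≤ (i:ℕ) ∧ (i:ℕ) < 2*s),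
      by rw [aux_card_band s (2*s) h2sl (by omega)]; omega, ?_⟩,
    hbl0, hblh, hPhi, xhatVec s d, hne.symm, hPhi.symm, le_of_eq (hblh.trans hbl0.symm)⟩
  · intro i hi
    simp only [Finset.mem_filter, Finset.mem_univ, true_and, not_lt] at hi
    ext j
    simp only [x0Vec, PiLp.toLp_apply]
    rw [if_neg (by omega)]
    rfl
  · intro i hi
    simp only [Finset.mem_filter, Finset.mem_univ, true_and, not_and, not_lt] at hi
    ext j
    simp only [xhatVec, PiLp.toLp_apply]
    rw [if_neg (by intro hc; exact absurd (hi hc.1) (by omega))]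
    rfl
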